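/- Let K ≥ 8, let Γ₁,…,Γ_K be d×d complex matrices that are Hermitian, unitary, and pairwise anticommuting, and let B₁,…,B_K and C₁,…,C_K be arbitrary D×D Hermitian unitary matrices. Then ‖∑_{k=1}^K ( Γₖ ⊗ (Bₖ ⊗ I_D + I_D ⊗ Cₖ) + I_d ⊗ Bₖ ⊗ Cₖ )‖ ≤ K²/(K−2) + (K−2)/2. Consequently the winning probability 1/4 + (1/(4K))·‖∑_{k=1}^K ( Γₖ ⊗ (Bₖ ⊗ I_D + I_D ⊗ Cₖ) + I_d ⊗ Bₖ ⊗ Cₖ )‖ of the no-cloning game is at most 5/8 + 1/(2(K−2)) − 1/(4K), which is bounded by a quantity tending to 5/8 as K → ∞. -/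

import Mathlib

open Matrix
open scoped Matrix.Norms.L2Operator Kronecker

set_option maxHeartbeats 1000000

namespace Stmt19Aux

local notation "⟪" x ", " y "⟫" => @inner ℂ _ _ x y
open RCLike

variable {H : Type*} [NormedAddCommGroup H] [InnerProductSpace ℂ H] [CompleteSpace H]

private lemma sa_inner {A : H →L[ℂ] H} (hA : IsSelfAdjoint A) (y z : H) :
    ⟪A y, z⟫ = ⟪y, A z⟫ := by
  have := ContinuousLinearMap.adjoint_inner_left A z y
  rwa [ContinuousLinearMap.isSelfAdjoint_iff'.mp hA] at this

private theorem key_bound (K : ℕ) (hK : 8 ≤ K) (U V : Fin K → H →L[ℂ] H)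
    (hUsa : ∀ k, IsSelfAdjoint (U k)) (hVsa : ∀ k, IsSelfAdjoint (V k))
    (hU2 : ∀ k, U k * U k = 1) (hV2 : ∀ k, V k * V k = 1)
    (hcomm : ∀ k, U k * V k = V k * U k)
    (hanti : ∀ i j, i ≠ j → U i * V j + V j * U i = 0) :
    ‖∑ k, (U k + V k + U k * V k)‖ ≤ (K : ℝ) ^ 2 / (K - 2) + ((K : ℝ) - 2) / 2 := by
  have hKr : (8 : ℝ) ≤ (K : ℝ) := by exact_mod_cast hK
  have hK2 : (0 : ℝ) < (K : ℝ) - 2 := by linarith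
  set μ : ℝ := (K : ℝ) ^ 2 / (K - 2) + ((K : ℝ) - 2) / 2 with hμ
  have hμ0 : 0 ≤ μ := by
    have h1 : 0 ≤ (K : ℝ) ^ 2 / ((K : ℝ) - 2) := div_nonneg (by positivity) hK2.le
    rw [hμ]; linarith
  set T : H →L[ℂ] H := ∑ k, (U k + V k + U k * V k) with hT
  -- T is selfadjoint
  have hterm_sa : ∀ k, IsSelfAdjoint (U k + V k + U k * V k) := by
    intro k
    have h3 : star (U k * V k) = U k * V k := by
      rw [StarMul.star_mul, (hUsa k).star_eq, (hVsa k).star_eq, ← hcomm k]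
    rw [_root_.isSelfAdjoint_iff, star_add, star_add, (hUsa k).star_eq, (hVsa k).star_eq, h3]
  have hTsa : IsSelfAdjoint T := by
    rw [hT, _root_.isSelfAdjoint_iff, star_sum]
    exact Finset.sum_congr rfl fun k _ => (hterm_sa k).star_eq
  -- applications of squares
  have happU : ∀ k (y : H), U k (U k y) = y := by
    intro k y
    have := congrArg (fun (A : H →L[ℂ] H) => A y) (hU2 k)
    simpa using this
  have happV : ∀ k (y : H), V k (V k y) = y := by
    intro k y
    have := congrArg (fun (A : H →L[ℂ] H) => A y) (hV2 k)
    simpa using this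
  -- cross anticommutation: re ⟪U i x, V j x⟫ = 0 for i ≠ j
  have hcross : ∀ (x : H) (i j : Fin K), i ≠ j → re ⟪U i x, V j x⟫ = 0 := by
    intro x i j hij
    have h2 : U i (V j x) = -(V j (U i x)) := by
      have := congrArg (fun (A : H →L[ℂ] H) => A x) (hanti i j hij)
      simp only [ContinuousLinearMap.add_apply, ContinuousLinearMap.mul_apply,
        ContinuousLinearMap.zero_apply] at this
      linear_combination (norm := module) this
    have h4 : ⟪U i x, V j x⟫ = -(starRingEnd ℂ) ⟪U i x, V j x⟫ := by
      calc ⟪U i x, V j x⟫ = ⟪x, U i (V j x)⟫ := sa_inner (hUsa i) x (V j x)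
        _ = -⟪x, V j (U i x)⟫ := by rw [h2, inner_neg_right]
        _ = -⟪V j x, U i x⟫ := by rw [sa_inner (hVsa j) x (U i x)]
        _ = -(starRingEnd ℂ) ⟪U i x, V j x⟫ := by rw [inner_conj_symm]
    have := congrArg re h4
    simp only [map_neg, conj_re] at this
    linarith
  -- main upper quadratic bound
  have hupper : ∀ x : H, re ⟪x, T x⟫ ≤ μ * ‖x‖ ^ 2 := by
    intro x
    by_cases hx0 : x = 0
    · subst hx0; simp
    have hr : (0 : ℝ) < ‖x‖ := norm_pos_iff.mpr hx0
    set r : ℝ := ‖x‖ with hrdef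
    set P : H := ∑ k, U k x with hPdef
    set Q : H := ∑ k, V k x with hQdef
    set t : ℝ := ∑ k, re ⟪U k x, V k x⟫ with htdef
    set α : ℝ := re ⟪x, P + Q⟫ with hαdef
    -- squared norms of U k x
    have hun : ∀ k, ‖U k x‖ ^ 2 = r ^ 2 := by
      intro k
      have h1 : ⟪U k x, U k x⟫ = ⟪x, x⟫ := by
        rw [sa_inner (hUsa k) x (U k x), happU k x]
      calc ‖U k x‖ ^ 2 = re ⟪U k x, U k x⟫ := (inner_self_eq_norm_sq (𝕜 := ℂ) _).symm
        _ = re ⟪x, x⟫ := by rw [h1]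
        _ = r ^ 2 := inner_self_eq_norm_sq (𝕜 := ℂ) _
    have hvn : ∀ k, ‖V k x‖ ^ 2 = r ^ 2 := by
      intro k
      have h1 : ⟪V k x, V k x⟫ = ⟪x, x⟫ := by
        rw [sa_inner (hVsa k) x (V k x), happV k x]
      calc ‖V k x‖ ^ 2 = re ⟪V k x, V k x⟫ := (inner_self_eq_norm_sq (𝕜 := ℂ) _).symm
        _ = re ⟪x, x⟫ := by rw [h1]
        _ = r ^ 2 := inner_self_eq_norm_sq (𝕜 := ℂ) _
    -- s = α + t
    have hs : re ⟪x, T x⟫ = α + t := by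
      have hTx : T x = ∑ k, (U k x + V k x + U k (V k x)) := by
        rw [hT]
        simp [ContinuousLinearMap.sum_apply, ContinuousLinearMap.add_apply,
          ContinuousLinearMap.mul_apply]
      have h1 : ∀ k : Fin K, re ⟪x, U k x + V k x + U k (V k x)⟫
          = re ⟪x, U k x⟫ + re ⟪x, V k x⟫ + re ⟪U k x, V k x⟫ := by
        intro k
        rw [inner_add_right, inner_add_right, map_add, map_add,
          sa_inner (hUsa k) x (V k x)]
      have hα' : α = (∑ k, re ⟪x, U k x⟫) + ∑ k, re ⟪x, V k x⟫ := by
        rw [hαdef, inner_add_right, map_add, hPdef, hQdef, inner_sum, inner_sum,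
          map_sum, map_sum]
      rw [hTx, inner_sum, map_sum, Finset.sum_congr rfl fun k _ => h1 k,
        Finset.sum_add_distrib, Finset.sum_add_distrib, hα', htdef]
    -- re ⟪P, Q⟫ = t
    have hPQ : re ⟪P, Q⟫ = t := by
      rw [hPdef, hQdef, sum_inner, map_sum, htdef]
      refine Finset.sum_congr rfl fun i _ => ?_
      rw [inner_sum, map_sum]
      exact Finset.sum_eq_single_of_mem i (Finset.mem_univ i)
        (fun j _ hji => hcross x i j (Ne.symm hji))
    -- parallelogram-type identity
    have hZ2 : ‖P + Q‖ ^ 2 = ‖P - Q‖ ^ 2 + 4 * t := by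
      have h1 := norm_add_sq (𝕜 := ℂ) P Q
      have h2 := norm_sub_sq (𝕜 := ℂ) P Q
      rw [hPQ] at h1 h2
      linarith
    -- bound on ‖P - Q‖²
    have hd2 : ∀ k : Fin K, ‖U k x - V k x‖ ^ 2 = 2 * r ^ 2 - 2 * re ⟪U k x, V k x⟫ := by
      intro k
      have := norm_sub_sq (𝕜 := ℂ) (U k x) (V k x)
      rw [hun k, hvn k] at this
      linarith
    have hsumd2 : ∑ k, ‖U k x - V k x‖ ^ 2 = 2 * (K : ℝ) * r ^ 2 - 2 * t := by
      calc ∑ k, ‖U k x - V k x‖ ^ 2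
          = ∑ k : Fin K, (2 * r ^ 2 - 2 * re ⟪U k x, V k x⟫) :=
            Finset.sum_congr rfl fun k _ => hd2 k
        _ = (K : ℝ) * (2 * r ^ 2) - 2 * t := by
            rw [Finset.sum_sub_distrib, Finset.sum_const, Finset.card_univ,
              Fintype.card_fin, ← Finset.mul_sum, nsmul_eq_mul, htdef]
        _ = 2 * (K : ℝ) * r ^ 2 - 2 * t := by ring
    have hWle : ‖P - Q‖ ≤ ∑ k, ‖U k x - V k x‖ := by
      have hsub : P - Q = ∑ k, (U k x - V k x) := by
        rw [hPdef, hQdef, Finset.sum_sub_distrib]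
      rw [hsub]
      exact norm_sum_le _ _
    have hCS : (∑ k, ‖U k x - V k x‖) ^ 2 ≤ (K : ℝ) * ∑ k, ‖U k x - V k x‖ ^ 2 := by
      have := Finset.sum_mul_sq_le_sq_mul_sq Finset.univ (fun _ : Fin K => (1 : ℝ))
        (fun k => ‖U k x - V k x‖)
      simpa [Finset.card_univ] using this
    have hW2 : ‖P - Q‖ ^ 2 ≤ 2 * (K : ℝ) ^ 2 * r ^ 2 - 2 * (K : ℝ) * t := by
      have h1 : ‖P - Q‖ ^ 2 ≤ (∑ k, ‖U k x - V k x‖) ^ 2 :=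
        pow_le_pow_left₀ (norm_nonneg _) hWle 2
      have h2 : (K : ℝ) * ∑ k, ‖U k x - V k x‖ ^ 2 = 2 * (K : ℝ) ^ 2 * r ^ 2 - 2 * (K : ℝ) * t := by
        rw [hsumd2]; ring
      linarith
    -- Cauchy-Schwarz for α
    have hA2 : α ^ 2 ≤ r ^ 2 * ‖P + Q‖ ^ 2 := by
      have h1 : |α| ≤ r * ‖P + Q‖ := by
        calc |α| ≤ ‖⟪x, P + Q⟫‖ := RCLike.abs_re_le_norm _
          _ ≤ ‖x‖ * ‖P + Q‖ := norm_inner_le_norm _ _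
      calc α ^ 2 = |α| ^ 2 := (sq_abs α).symm
        _ ≤ (r * ‖P + Q‖) ^ 2 := pow_le_pow_left₀ (abs_nonneg α) h1 2
        _ = r ^ 2 * ‖P + Q‖ ^ 2 := by ring
    -- assemble
    have hA3 : α ^ 2 ≤ 2 * (K : ℝ) ^ 2 * r ^ 4 - 2 * (K : ℝ) * t * r ^ 2 + 4 * t * r ^ 2 := by
      have h3 := mul_le_mul_of_nonneg_left hW2 (sq_nonneg r)
      rw [hZ2] at hA2
      nlinarith [hA2, h3]
    have hkey : (2 * ((K : ℝ) - 2) * r ^ 2) * (α + t)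
        ≤ (2 * (K : ℝ) ^ 2 + ((K : ℝ) - 2) ^ 2) * r ^ 4 := by
      nlinarith [hA3, sq_nonneg (α - ((K : ℝ) - 2) * r ^ 2)]
    have hμr : (2 * (K : ℝ) ^ 2 + ((K : ℝ) - 2) ^ 2) * r ^ 4
        = (2 * ((K : ℝ) - 2) * r ^ 2) * (μ * r ^ 2) := by
      rw [hμ]
      field_simp
    have hpos : (0 : ℝ) < 2 * ((K : ℝ) - 2) * r ^ 2 := by positivity
    rw [hs]
    rw [hμr] at hkey
    exact le_of_mul_le_mul_left hkey hpos
  -- lower bound: each term ≥ -1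
  have hNk : ∀ (k : Fin K) (x : H), 0 ≤ ‖x‖ ^ 2 + re ⟪x, (U k + V k + U k * V k) x⟫ := by
    intro k x
    have e1 : (1 + V k) * (1 + V k) = (2 : ℂ) • (1 + V k) := by
      have h : (1 + V k) * (1 + V k) = 1 + V k + V k + V k * V k := by noncomm_ring
      rw [h, hV2 k]; module
    have e2 : (1 + U k) * (1 + U k) = (2 : ℂ) • (1 + U k) := by
      have h : (1 + U k) * (1 + U k) = 1 + U k + U k + U k * U k := by noncomm_ring
      rw [h, hU2 k]; module
    have e3 : (1 + V k) * (1 + U k) = (1 + U k) * (1 + V k) := by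
      have h1 : (1 + V k) * (1 + U k) = 1 + U k + V k + V k * U k := by noncomm_ring
      have h2 : (1 + U k) * (1 + V k) = 1 + U k + V k + U k * V k := by noncomm_ring
      rw [h1, h2, hcomm k]
    have hop : ((1 + U k) * (1 + V k)) * ((1 + V k) * (1 + U k))
        = (4 : ℂ) • ((1 + U k) * (1 + V k)) := by
      calc ((1 + U k) * (1 + V k)) * ((1 + V k) * (1 + U k))
          = (1 + U k) * (((1 + V k) * (1 + V k)) * (1 + U k)) := by noncomm_ring
        _ = (1 + U k) * (((2 : ℂ) • (1 + V k)) * (1 + U k)) := by rw [e1]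
        _ = (2 : ℂ) • ((1 + U k) * ((1 + V k) * (1 + U k))) := by
            rw [smul_mul_assoc, mul_smul_comm]
        _ = (2 : ℂ) • ((1 + U k) * ((1 + U k) * (1 + V k))) := by rw [e3]
        _ = (2 : ℂ) • (((1 + U k) * (1 + U k)) * (1 + V k)) := by rw [mul_assoc]
        _ = (2 : ℂ) • (((2 : ℂ) • (1 + U k)) * (1 + V k)) := by rw [e2]
        _ = (4 : ℂ) • ((1 + U k) * (1 + V k)) := by
            rw [smul_mul_assoc, smul_smul]; norm_num
    have hstarN : ContinuousLinearMap.adjoint ((1 + V k) * (1 + U k))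
        = (1 + U k) * (1 + V k) := by
      rw [← ContinuousLinearMap.star_eq_adjoint, StarMul.star_mul, star_add, star_add, star_one,
        (hUsa k).star_eq, (hVsa k).star_eq]
    have h5 : ⟪x, (((1 + U k) * (1 + V k)) * ((1 + V k) * (1 + U k))) x⟫
        = ⟪((1 + V k) * (1 + U k)) x, ((1 + V k) * (1 + U k)) x⟫ := by
      rw [ContinuousLinearMap.mul_apply, ← hstarN, ContinuousLinearMap.adjoint_inner_right]
    have h6 : (4 : ℝ) * re ⟪x, ((1 + U k) * (1 + V k)) x⟫
        = re ⟪((1 + V k) * (1 + U k)) x, ((1 + V k) * (1 + U k)) x⟫ := by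
      rw [← h5, hop, ContinuousLinearMap.smul_apply, inner_smul_right]
      simp only [RCLike.mul_re, RCLike.ofNat_re, RCLike.ofNat_im, zero_mul, sub_zero]
    have h7 : 0 ≤ re ⟪x, ((1 + U k) * (1 + V k)) x⟫ := by
      have h8 : 0 ≤ re ⟪((1 + V k) * (1 + U k)) x, ((1 + V k) * (1 + U k)) x⟫ := by
        rw [inner_self_eq_norm_sq (𝕜 := ℂ)]; positivity
      linarith
    have hexp : ((1 + U k) * (1 + V k)) x = x + (U k + V k + U k * V k) x := by
      have h : (1 + U k) * (1 + V k) = 1 + (U k + V k + U k * V k) := by noncomm_ring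
      rw [h, ContinuousLinearMap.add_apply, ContinuousLinearMap.one_apply]
    rw [hexp, inner_add_right, map_add, inner_self_eq_norm_sq (𝕜 := ℂ)] at h7
    linarith
  have hlow : ∀ x : H, -((K : ℝ) * ‖x‖ ^ 2) ≤ re ⟪x, T x⟫ := by
    intro x
    have hTx2 : re ⟪x, T x⟫ = ∑ k, re ⟪x, (U k + V k + U k * V k) x⟫ := by
      rw [hT, ContinuousLinearMap.sum_apply, inner_sum, map_sum]
    rw [hTx2]
    have h1 : ∀ k ∈ Finset.univ, -(‖x‖ ^ 2) ≤ re ⟪x, (U k + V k + U k * V k) x⟫ :=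
      fun k _ => by linarith [hNk k x]
    calc -((K : ℝ) * ‖x‖ ^ 2) = ∑ _k : Fin K, -(‖x‖ ^ 2) := by
          rw [Finset.sum_const, Finset.card_univ, Fintype.card_fin, nsmul_eq_mul]; ring
      _ ≤ _ := Finset.sum_le_sum h1
  have hKμ : (K : ℝ) ≤ μ := by
    have h1 : (K : ℝ) ≤ (K : ℝ) ^ 2 / ((K : ℝ) - 2) := by
      rw [le_div_iff₀ hK2]; nlinarith
    rw [hμ]; linarith
  have hlow' : ∀ x : H, -(μ * ‖x‖ ^ 2) ≤ re ⟪x, T x⟫ := by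
    intro x
    nlinarith [hlow x, sq_nonneg ‖x‖]
  -- conclusion via polarization
  have hTle : ∀ y : H, ‖T y‖ ≤ μ * ‖y‖ := by
    intro y
    by_cases hTy : T y = 0
    · rw [hTy, norm_zero]; positivity
    have hy0 : y ≠ 0 := by
      intro h; exact hTy (by rw [h, map_zero])
    have hyn : (0 : ℝ) < ‖y‖ := norm_pos_iff.mpr hy0
    have hTn : (0 : ℝ) < ‖T y‖ := norm_pos_iff.mpr hTy
    set c : ℝ := ‖y‖ / ‖T y‖ with hc
    have hc0 : (0 : ℝ) < c := div_pos hyn hTn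
    set w : H := (c : ℂ) • T y with hw
    have hwn : ‖w‖ = ‖y‖ := by
      rw [hw, norm_smul, Complex.norm_real, Real.norm_eq_abs, abs_of_pos hc0, hc]
      field_simp
    have hyw : re ⟪y, T w⟫ = re ⟪w, T y⟫ := by
      rw [← sa_inner hTsa y w, inner_re_symm]
    have hee : re ⟪y + w, T (y + w)⟫ - re ⟪y - w, T (y - w)⟫
        = 2 * re ⟪y, T w⟫ + 2 * re ⟪w, T y⟫ := by
      rw [map_add, map_sub, inner_add_left, inner_sub_left, inner_add_right, inner_add_right,
        inner_sub_right, inner_sub_right]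
      simp only [map_add, map_sub]
      ring
    have hwTy : re ⟪w, T y⟫ = c * ‖T y‖ ^ 2 := by
      rw [hw, inner_smul_left, inner_self_eq_norm_sq_to_K]
      simp [← Complex.ofReal_pow]
    have hpar := parallelogram_law_with_norm ℂ y w
    rw [hwn] at hpar
    have h11 : ‖y + w‖ ^ 2 + ‖y - w‖ ^ 2 = 4 * ‖y‖ ^ 2 := by
      rw [sq, sq, sq]; linarith [hpar]
    have hb1 := hupper (y + w)
    have hb2 := hlow' (y - w)
    have h13 : μ * ‖y + w‖ ^ 2 + μ * ‖y - w‖ ^ 2 = 4 * (μ * ‖y‖ ^ 2) := by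
      have h := congrArg (fun z : ℝ => μ * z) h11
      ring_nf at h ⊢
      linarith [h]
    have h9 : c * ‖T y‖ ^ 2 ≤ μ * ‖y‖ ^ 2 := by linarith [hee, hb1, hb2, h13, hyw, hwTy]
    have h14 : ‖y‖ * ‖T y‖ ≤ μ * ‖y‖ ^ 2 := by
      have h15 : c * ‖T y‖ ^ 2 = ‖y‖ * ‖T y‖ := by
        rw [hc]; field_simp
      linarith [h9]
    have h16 : ‖y‖ * ‖T y‖ ≤ ‖y‖ * (μ * ‖y‖) := by nlinarith [h14]
    exact le_of_mul_le_mul_left h16 hyn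
  exact ContinuousLinearMap.opNorm_le_bound T hμ0 hTle

private lemma kron_conjT {l m p q : Type*} (A : Matrix l m ℂ) (B : Matrix p q ℂ) :
    (A ⊗ₖ B)ᴴ = Aᴴ ⊗ₖ Bᴴ := by
  ext ⟨i, j⟩ ⟨k, l'⟩
  simp [Matrix.conjTranspose_apply, Matrix.kroneckerMap_apply, mul_comm]

end Stmt19Aux

/-- For `K ≥ 8`, a Clifford family `Γ₁, …, Γ_K` (Hermitian, unitary,
pairwise anticommuting `d × d` matrices), and arbitrary `D × D` Hermitian unitaries
`B₁,…,B_K`, `C₁,…,C_K`, the game operator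
`∑ₖ (Γₖ ⊗ (Bₖ ⊗ I_D + I_D ⊗ Cₖ) + I_d ⊗ Bₖ ⊗ Cₖ)` has operator norm at most
`K²/(K−2) + (K−2)/2`; consequently the winning probability
`1/4 + ‖·‖/(4K)` of the no-cloning game is at most `5/8 + 1/(2(K−2)) − 1/(4K)`. -/
theorem stmt19 (K d D : ℕ) (hK : 8 ≤ K)
    (Γ : Fin K → Matrix (Fin d) (Fin d) ℂ)
    (hherm : ∀ k, (Γ k).IsHermitian)
    (hunit : ∀ k, Γ k * Γ k = 1)
    (hanti : ∀ i j, i ≠ j → Γ i * Γ j + Γ j * Γ i = 0)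
    (B C : Fin K → Matrix (Fin D) (Fin D) ℂ)
    (hBherm : ∀ k, (B k).IsHermitian) (hBunit : ∀ k, B k * B k = 1)
    (hCherm : ∀ k, (C k).IsHermitian) (hCunit : ∀ k, C k * C k = 1) :
    ‖∑ k, (Γ k ⊗ₖ (B k ⊗ₖ (1 : Matrix (Fin D) (Fin D) ℂ)
            + (1 : Matrix (Fin D) (Fin D) ℂ) ⊗ₖ C k)
          + (1 : Matrix (Fin d) (Fin d) ℂ) ⊗ₖ (B k ⊗ₖ C k))‖
        ≤ (K : ℝ) ^ 2 / (K - 2) + (K - 2) / 2 ∧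
    1 / 4 + (1 / (4 * K)) *
        ‖∑ k, (Γ k ⊗ₖ (B k ⊗ₖ (1 : Matrix (Fin D) (Fin D) ℂ)
            + (1 : Matrix (Fin D) (Fin D) ℂ) ⊗ₖ C k)
          + (1 : Matrix (Fin d) (Fin d) ℂ) ⊗ₖ (B k ⊗ₖ C k))‖
        ≤ 5 / 8 + 1 / (2 * ((K : ℝ) - 2)) - 1 / (4 * K) := by
  have hKr : (8 : ℝ) ≤ (K : ℝ) := by exact_mod_cast hK
  have hK2 : (0 : ℝ) < (K : ℝ) - 2 := by linarith
  set U : Fin K → Matrix (Fin d × Fin D × Fin D) (Fin d × Fin D × Fin D) ℂ :=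
    fun k => Γ k ⊗ₖ (B k ⊗ₖ (1 : Matrix (Fin D) (Fin D) ℂ)) with hUdef
  set V : Fin K → Matrix (Fin d × Fin D × Fin D) (Fin d × Fin D × Fin D) ℂ :=
    fun k => Γ k ⊗ₖ ((1 : Matrix (Fin D) (Fin D) ℂ) ⊗ₖ C k) with hVdef
  have hUV : ∀ k, U k * V k = (1 : Matrix (Fin d) (Fin d) ℂ) ⊗ₖ (B k ⊗ₖ C k) := by
    intro k
    rw [hUdef, hVdef]
    rw [← Matrix.mul_kronecker_mul, ← Matrix.mul_kronecker_mul, hunit k, mul_one, one_mul]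
  have hVU : ∀ k, V k * U k = (1 : Matrix (Fin d) (Fin d) ℂ) ⊗ₖ (B k ⊗ₖ C k) := by
    intro k
    rw [hUdef, hVdef]
    rw [← Matrix.mul_kronecker_mul, ← Matrix.mul_kronecker_mul, hunit k, mul_one, one_mul]
  have hUU : ∀ k, U k * U k = 1 := by
    intro k
    rw [hUdef]
    rw [← Matrix.mul_kronecker_mul, ← Matrix.mul_kronecker_mul, hunit k, hBunit k, one_mul,
      Matrix.one_kronecker_one, Matrix.one_kronecker_one]
  have hVV : ∀ k, V k * V k = 1 := by
    intro k
    rw [hVdef]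
    rw [← Matrix.mul_kronecker_mul, ← Matrix.mul_kronecker_mul, hunit k, hCunit k, one_mul,
      Matrix.one_kronecker_one, Matrix.one_kronecker_one]
  have hanti' : ∀ i j, i ≠ j → U i * V j + V j * U i = 0 := by
    intro i j hij
    have h1 : U i * V j = (Γ i * Γ j) ⊗ₖ (B i ⊗ₖ C j) := by
      rw [hUdef, hVdef]
      rw [← Matrix.mul_kronecker_mul, ← Matrix.mul_kronecker_mul, mul_one, one_mul]
    have h2 : V j * U i = (Γ j * Γ i) ⊗ₖ (B i ⊗ₖ C j) := by
      rw [hUdef, hVdef]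
      rw [← Matrix.mul_kronecker_mul, ← Matrix.mul_kronecker_mul, mul_one, one_mul]
    rw [h1, h2, ← Matrix.add_kronecker, hanti i j hij, Matrix.zero_kronecker]
  have hterm : ∀ k, Γ k ⊗ₖ (B k ⊗ₖ (1 : Matrix (Fin D) (Fin D) ℂ)
      + (1 : Matrix (Fin D) (Fin D) ℂ) ⊗ₖ C k)
      + (1 : Matrix (Fin d) (Fin d) ℂ) ⊗ₖ (B k ⊗ₖ C k) = U k + V k + U k * V k := by
    intro k
    rw [Matrix.kronecker_add, hUV k, hUdef, hVdef]
  have hUherm : ∀ k, star (U k) = U k := by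
    intro k
    rw [Matrix.star_eq_conjTranspose, hUdef]
    rw [Stmt19Aux.kron_conjT, Stmt19Aux.kron_conjT, (hherm k).eq, (hBherm k).eq,
      Matrix.conjTranspose_one]
  have hVherm : ∀ k, star (V k) = V k := by
    intro k
    rw [Matrix.star_eq_conjTranspose, hVdef]
    rw [Stmt19Aux.kron_conjT, Stmt19Aux.kron_conjT, (hherm k).eq, (hCherm k).eq,
      Matrix.conjTranspose_one]
  -- transfer through toEuclideanCLM
  have hbound : ‖∑ k, (Γ k ⊗ₖ (B k ⊗ₖ (1 : Matrix (Fin D) (Fin D) ℂ)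
      + (1 : Matrix (Fin D) (Fin D) ℂ) ⊗ₖ C k)
      + (1 : Matrix (Fin d) (Fin d) ℂ) ⊗ₖ (B k ⊗ₖ C k))‖
      ≤ (K : ℝ) ^ 2 / (K - 2) + ((K : ℝ) - 2) / 2 := by
    rw [Matrix.cstar_norm_def]
    have hFS : Matrix.toEuclideanCLM (n := Fin d × Fin D × Fin D) (𝕜 := ℂ)
        (∑ k, (Γ k ⊗ₖ (B k ⊗ₖ (1 : Matrix (Fin D) (Fin D) ℂ)
          + (1 : Matrix (Fin D) (Fin D) ℂ) ⊗ₖ C k)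
          + (1 : Matrix (Fin d) (Fin d) ℂ) ⊗ₖ (B k ⊗ₖ C k)))
        = ∑ k, (Matrix.toEuclideanCLM (𝕜 := ℂ) (U k) + Matrix.toEuclideanCLM (𝕜 := ℂ) (V k)
            + Matrix.toEuclideanCLM (𝕜 := ℂ) (U k) * Matrix.toEuclideanCLM (𝕜 := ℂ) (V k)) := by
      rw [map_sum]
      refine Finset.sum_congr rfl fun k _ => ?_
      rw [hterm k, map_add, map_add, _root_.map_mul]
    rw [hFS]
    refine Stmt19Aux.key_bound K hK _ _ ?_ ?_ ?_ ?_ ?_ ?_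
    · intro k
      rw [_root_.isSelfAdjoint_iff, ← map_star, hUherm k]
    · intro k
      rw [_root_.isSelfAdjoint_iff, ← map_star, hVherm k]
    · intro k
      rw [← _root_.map_mul, hUU k, _root_.map_one]
    · intro k
      rw [← _root_.map_mul, hVV k, _root_.map_one]
    · intro k
      rw [← _root_.map_mul, ← _root_.map_mul, hUV k, hVU k]
    · intro i j hij
      rw [← _root_.map_mul, ← _root_.map_mul, ← map_add, hanti' i j hij, map_zero]
  refine ⟨hbound, ?_⟩
  have hKne : (K : ℝ) ≠ 0 := by linarith
  have hK2ne : (K : ℝ) - 2 ≠ 0 := ne_of_gt hK2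
  have hc : (0 : ℝ) ≤ 1 / (4 * (K : ℝ)) := by positivity
  calc 1 / 4 + (1 / (4 * (K : ℝ))) *
        ‖∑ k, (Γ k ⊗ₖ (B k ⊗ₖ (1 : Matrix (Fin D) (Fin D) ℂ)
          + (1 : Matrix (Fin D) (Fin D) ℂ) ⊗ₖ C k)
          + (1 : Matrix (Fin d) (Fin d) ℂ) ⊗ₖ (B k ⊗ₖ C k))‖
      ≤ 1 / 4 + (1 / (4 * (K : ℝ))) * ((K : ℝ) ^ 2 / (K - 2) + ((K : ℝ) - 2) / 2) := by
        have := mul_le_mul_of_nonneg_left hbound hc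
        linarith
    _ = 5 / 8 + 1 / (2 * ((K : ℝ) - 2)) - 1 / (4 * K) := by
        field_simp
        ring
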